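/- Let f : ℂ² → ℂ be a nonzero homogeneous polynomial of degree d ≥ 1. Then the Łojasiewicz gradient exponent of f at the origin equals 1 - 1/d. -/

import Mathlib

set_option maxHeartbeats 2000000
set_option synthInstance.maxHeartbeats 400000

noncomputable def LGE {𝕜 : Type*} [RCLike 𝕜] {E : Type*} [NormedAddCommGroup E]
    [NormedSpace 𝕜 E] (f : E → 𝕜) : ℝ :=
  sInf {l : ℝ | 0 < l ∧ ∃ c > (0:ℝ), ∃ ε > (0:ℝ), ∀ z : E, ‖z‖ < ε →
    c * ‖f z‖ ^ l ≤ ‖fderiv 𝕜 f z‖}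

open MvPolynomial

noncomputable section Stmt10Aux

abbrev E2 := EuclideanSpace ℂ (Fin 2)

lemma rpow_mono_exp {s a b : ℝ} (hs0 : 0 ≤ s) (hs1 : s ≤ 1) (hb : 0 ≤ b) (hba : b ≤ a) :
    s ^ a ≤ s ^ b := by
  rcases eq_or_lt_of_le hs0 with h | h
  · rcases eq_or_lt_of_le (hb.trans hba) with ha | ha
    · have hb0 : b = 0 := le_antisymm (ha ▸ hba) hb
      rw [← h, hb0, ← ha]
    · rw [← h, Real.zero_rpow ha.ne']
      positivity
  · exact Real.rpow_le_rpow_of_exponent_ge h hs1 hba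

lemma rpow_le_one_add {x e : ℝ} (hx : 0 ≤ x) (he0 : 0 ≤ e) (he1 : e ≤ 1) : x ^ e ≤ 1 + x := by
  rcases le_total x 1 with h | h
  · have := Real.rpow_le_one hx h he0
    linarith
  · have h1 := Real.rpow_le_rpow_of_exponent_le h he1
    rw [Real.rpow_one] at h1
    linarith

lemma exists_pos_forall_le {K : Set ℂ} (hK : IsCompact K) {G : ℂ → ℝ}
    (hG : Continuous G) (hpos : ∀ t ∈ K, 0 < G t) : ∃ c > 0, ∀ t ∈ K, c ≤ G t := by
  rcases K.eq_empty_or_nonempty with h | hne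
  · exact ⟨1, one_pos, by simp [h]⟩
  · obtain ⟨t0, ht0, hmin⟩ := hK.exists_isMinOn hne hG.continuousOn
    exact ⟨G t0, hpos t0 ht0, fun t ht => hmin ht⟩

lemma lemA (d : ℕ) (hd : 1 ≤ d) (g : Polynomial ℂ) (hg : g ≠ 0) (hdeg : g.natDegree ≤ d) :
    ∃ c > 0, ∀ t : ℂ, ‖t‖ ≤ 1 →
      c * ‖g.eval t‖ ^ (((d : ℝ) - 1) / d) ≤ ‖(Polynomial.derivative g).eval t‖ + ‖g.eval t‖ := by
  have hd0 : (0:ℝ) < d := by exact_mod_cast Nat.pos_of_ne_zero (by omega)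
  set e : ℝ := ((d : ℝ) - 1) / d with he
  have hd1 : (1:ℝ) ≤ d := by exact_mod_cast hd
  have he0 : 0 ≤ e := div_nonneg (by linarith) hd0.le
  have he1 : e ≤ 1 := by rw [he, div_le_one hd0]; linarith
  -- local estimates near roots
  have loc : ∀ r : ℂ, ∃ δ > 0, ∃ cr > 0, g.IsRoot r → ∀ t : ℂ, ‖t - r‖ < δ →
      cr * ‖g.eval t‖ ^ e ≤ ‖(Polynomial.derivative g).eval t‖ := by
    intro r
    by_cases hr : g.IsRoot r
    swap
    · exact ⟨1, one_pos, 1, one_pos, fun h => absurd h hr⟩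
    set m := g.rootMultiplicity r with hm
    have hm1 : 1 ≤ m := (Polynomial.rootMultiplicity_pos hg).2 hr
    obtain ⟨k, hk⟩ : ∃ k, m = k + 1 := ⟨m - 1, (Nat.succ_pred_eq_of_pos hm1).symm⟩
    have hmd : m ≤ d := by
      have h1 := Polynomial.natDegree_le_of_dvd (Polynomial.pow_rootMultiplicity_dvd g r) hg
      rw [Polynomial.natDegree_pow, Polynomial.natDegree_X_sub_C, mul_one] at h1
      exact h1.trans hdeg
    set h := g /ₘ (Polynomial.X - Polynomial.C r) ^ m with hh
    have hfact : (Polynomial.X - Polynomial.C r) ^ m * h = g :=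
      Polynomial.pow_mul_divByMonic_rootMultiplicity_eq g r
    have hhr : h.eval r ≠ 0 := Polynomial.eval_divByMonic_pow_rootMultiplicity_ne_zero r hg
    have hhr' : 0 < ‖h.eval r‖ := norm_pos_iff.2 hhr
    set u : ℂ → ℂ := fun t => (m : ℂ) * h.eval t + (t - r) * (Polynomial.derivative h).eval t
      with hu
    have hur : u r = (m : ℂ) * h.eval r := by simp [hu]
    have hur' : 0 < ‖u r‖ := by
      rw [hur, norm_mul]
      have : (0:ℝ) < m := by exact_mod_cast hm1
      simp only [Complex.norm_natCast]
      positivity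
    have hucont : Continuous u := by
      apply Continuous.add
      · exact continuous_const.mul (Polynomial.continuous h)
      · exact (continuous_id.sub continuous_const).mul (Polynomial.continuous _)
    -- eventually bounds
    have ev1 : ∀ᶠ t in nhds r, ‖u r‖ / 2 < ‖u t‖ :=
      (hucont.norm.tendsto r).eventually_const_lt (by linarith)
    have ev2 : ∀ᶠ t in nhds r, ‖h.eval t‖ < 2 * ‖h.eval r‖ :=
      ((Polynomial.continuous h).norm.tendsto r).eventually_lt_const (by linarith)
    obtain ⟨δ, hδ0, hδ⟩ := Metric.eventually_nhds_iff.1 (ev1.and ev2)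
    refine ⟨min δ 1, lt_min hδ0 one_pos, (↑m * ‖h.eval r‖ / 2) / (1 + 2 * ‖h.eval r‖),
      by positivity, fun _ t ht => ?_⟩
    have hts : ‖t - r‖ < δ := lt_of_lt_of_le ht (min_le_left _ _)
    have ht1 : ‖t - r‖ ≤ 1 := le_of_lt (lt_of_lt_of_le ht (min_le_right _ _))
    obtain ⟨h1, h2⟩ := hδ (show dist t r < δ by rwa [dist_eq_norm])
    set s : ℝ := ‖t - r‖ with hs
    have hs0 : 0 ≤ s := norm_nonneg _
    -- eval identities
    have hgev : g.eval t = (t - r) ^ m * h.eval t := by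
      conv_lhs => rw [← hfact]
      simp
    have hgdev : (Polynomial.derivative g).eval t = (t - r) ^ k * u t := by
      conv_lhs => rw [← hfact]
      rw [Polynomial.derivative_mul, Polynomial.derivative_pow, Polynomial.derivative_X_sub_C]
      simp only [Polynomial.eval_add, Polynomial.eval_mul, Polynomial.eval_pow,
        Polynomial.eval_sub, Polynomial.eval_X, Polynomial.eval_C, Polynomial.eval_natCast,
        mul_one, hu, hk]
      push_cast
      ring
    -- norms
    have hn1 : ‖(Polynomial.derivative g).eval t‖ = s ^ k * ‖u t‖ := by
      rw [hgdev, norm_mul, norm_pow]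
    have hn2 : ‖g.eval t‖ = s ^ m * ‖h.eval t‖ := by
      rw [hgev, norm_mul, norm_pow]
    have key : ‖g.eval t‖ ^ e ≤ s ^ k * (1 + 2 * ‖h.eval r‖) := by
      rw [hn2, Real.mul_rpow (by positivity) (norm_nonneg _)]
      have c1 : (s ^ m : ℝ) ^ e ≤ s ^ k := by
        rw [← Real.rpow_natCast s m, ← Real.rpow_natCast s k, ← Real.rpow_mul hs0]
        apply rpow_mono_exp hs0 ht1 (by positivity)
        have hmdr : (k:ℝ) + 1 ≤ (d:ℝ) := by exact_mod_cast hk ▸ hmd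
        have hkm : (m:ℝ) = (k:ℝ) + 1 := by exact_mod_cast hk
        rw [he, mul_div_assoc', le_div_iff₀ hd0, hkm]
        nlinarith
      have c2 : ‖h.eval t‖ ^ e ≤ 1 + 2 * ‖h.eval r‖ := by
        calc ‖h.eval t‖ ^ e ≤ 1 + ‖h.eval t‖ := rpow_le_one_add (norm_nonneg _) he0 he1
          _ ≤ 1 + 2 * ‖h.eval r‖ := by linarith
      calc (s ^ m : ℝ) ^ e * ‖h.eval t‖ ^ e ≤ s ^ k * ‖h.eval t‖ ^ e := by
            apply mul_le_mul_of_nonneg_right c1 (by positivity)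
        _ ≤ s ^ k * (1 + 2 * ‖h.eval r‖) := by
            apply mul_le_mul_of_nonneg_left c2 (by positivity)
    calc (↑m * ‖h.eval r‖ / 2) / (1 + 2 * ‖h.eval r‖) * ‖g.eval t‖ ^ e
        ≤ (↑m * ‖h.eval r‖ / 2) / (1 + 2 * ‖h.eval r‖) * (s ^ k * (1 + 2 * ‖h.eval r‖)) := by
          apply mul_le_mul_of_nonneg_left key (by positivity)
      _ = s ^ k * (↑m * ‖h.eval r‖ / 2) := by
          field_simp
      _ = s ^ k * (‖u r‖ / 2) := by rw [hur, norm_mul, Complex.norm_natCast]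
      _ ≤ s ^ k * ‖u t‖ := by
          apply mul_le_mul_of_nonneg_left (le_of_lt h1) (by positivity)
      _ = ‖(Polynomial.derivative g).eval t‖ := hn1.symm
  -- choose data
  choose δ hδ0 cr hcr0 hloc using loc
  classical
  set R : Finset ℂ := g.roots.toFinset with hR
  have hmemR : ∀ r : ℂ, g.IsRoot r → r ∈ R := by
    intro r hr
    rw [hR, Multiset.mem_toFinset, Polynomial.mem_roots hg]
    exact hr
  set K : Set ℂ := {t : ℂ | ‖t‖ ≤ 1 ∧ ∀ r ∈ R, δ r ≤ ‖t - r‖} with hK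
  have hKclosed : IsClosed K := by
    have : K = {t : ℂ | ‖t‖ ≤ 1} ∩ ⋂ r ∈ R, {t | δ r ≤ ‖t - r‖} := by
      ext t
      simp [hK, Set.mem_iInter]
    rw [this]
    refine (isClosed_le (by continuity) (by continuity)).inter
      (isClosed_biInter fun r _ => isClosed_le (by continuity) (by continuity))
  have hKcompact : IsCompact K := by
    apply Metric.isCompact_of_isClosed_isBounded hKclosed
    apply (Metric.isBounded_closedBall (x := (0:ℂ)) (r := 1)).subset
    intro t ht
    simpa [Metric.mem_closedBall, dist_eq_norm] using ht.1
  have hKne : ∀ t ∈ K, (0:ℝ) < ‖g.eval t‖ := by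
    intro t ht
    rw [norm_pos_iff]
    intro h0
    have hmem : t ∈ R := hmemR t h0
    have h3 := ht.2 t hmem
    simp only [sub_self, norm_zero] at h3
    exact absurd h3 (not_le.2 (hδ0 t))
  obtain ⟨μ, hμ0, hμ⟩ := exists_pos_forall_le hKcompact ((Polynomial.continuous g).norm) hKne
  set c0 : ℝ := μ ^ (1 - e) with hc0
  have hc00 : 0 < c0 := Real.rpow_pos_of_pos hμ0 _
  have hKbound : ∀ t ∈ K, c0 * ‖g.eval t‖ ^ e ≤ ‖g.eval t‖ := by
    intro t ht
    have h1 : c0 ≤ ‖g.eval t‖ ^ (1 - e) :=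
      Real.rpow_le_rpow hμ0.le (hμ t ht) (by linarith)
    calc c0 * ‖g.eval t‖ ^ e ≤ ‖g.eval t‖ ^ (1 - e) * ‖g.eval t‖ ^ e := by
          apply mul_le_mul_of_nonneg_right h1 (Real.rpow_nonneg (norm_nonneg _) _)
      _ = ‖g.eval t‖ := by
          rw [← Real.rpow_add (hKne t ht), sub_add_cancel, Real.rpow_one]
  obtain ⟨cR, hcR0, hcRle⟩ : ∃ cR > 0, ∀ r ∈ R, cR ≤ cr r := by
    rcases R.eq_empty_or_nonempty with h | hne
    · exact ⟨1, one_pos, by simp [h]⟩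
    · exact ⟨R.inf' hne cr, (Finset.lt_inf'_iff _).2 fun r _ => hcr0 r,
        fun r hr => Finset.inf'_le cr hr⟩
  refine ⟨min c0 cR, lt_min hc00 hcR0, fun t ht => ?_⟩
  by_cases hcase : ∃ r ∈ R, ‖t - r‖ < δ r
  · obtain ⟨r, hrR, hr⟩ := hcase
    have hroot : g.IsRoot r := (Polynomial.mem_roots hg).1 (Multiset.mem_toFinset.1 hrR)
    have := hloc r hroot t hr
    calc min c0 cR * ‖g.eval t‖ ^ e ≤ cr r * ‖g.eval t‖ ^ e := by
          apply mul_le_mul_of_nonneg_right ((min_le_right _ _).trans (hcRle r hrR))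
            (Real.rpow_nonneg (norm_nonneg _) _)
      _ ≤ ‖(Polynomial.derivative g).eval t‖ := this
      _ ≤ ‖(Polynomial.derivative g).eval t‖ + ‖g.eval t‖ := by
          linarith [norm_nonneg (g.eval t)]
  · push_neg at hcase
    have htK : t ∈ K := ⟨ht, fun r hr => hcase r hr⟩
    calc min c0 cR * ‖g.eval t‖ ^ e ≤ c0 * ‖g.eval t‖ ^ e := by
          apply mul_le_mul_of_nonneg_right (min_le_left _ _)
            (Real.rpow_nonneg (norm_nonneg _) _)
      _ ≤ ‖g.eval t‖ := hKbound t htK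
      _ ≤ ‖(Polynomial.derivative g).eval t‖ + ‖g.eval t‖ := by
          linarith [norm_nonneg ((Polynomial.derivative g).eval t)]

lemma support_degree {d : ℕ} {f : MvPolynomial (Fin 2) ℂ} (hhom : f.IsHomogeneous d)
    {u : Fin 2 →₀ ℕ} (hu : u ∈ f.support) : ∑ i ∈ u.support, u i = d := by
  by_contra hne
  exact (MvPolynomial.mem_support_iff.1 hu) (hhom.coeff_eq_zero hne)

lemma eval_smul_hom {d : ℕ} {f : MvPolynomial (Fin 2) ℂ} (hhom : f.IsHomogeneous d)
    (c : ℂ) (x : Fin 2 → ℂ) : eval (c • x) f = c ^ d * eval x f := by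
  rw [eval_eq, eval_eq, Finset.mul_sum]
  apply Finset.sum_congr rfl
  intro u hu
  simp only [Pi.smul_apply, smul_eq_mul, mul_pow, Finset.prod_mul_distrib,
    Finset.prod_pow_eq_pow_sum, support_degree hhom hu]
  ring

noncomputable def chartPoly (j : Fin 2) (f : MvPolynomial (Fin 2) ℂ) : Polynomial ℂ :=
  eval₂ Polynomial.C (fun i => if i = j then 1 else Polynomial.X) f

lemma chartPoly_eval (j : Fin 2) (f : MvPolynomial (Fin 2) ℂ) (t : ℂ) :
    (chartPoly j f).eval t = eval (fun i => if i = j then (1:ℂ) else t) f := by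
  show Polynomial.evalRingHom t (eval₂ Polynomial.C _ f) = _
  rw [MvPolynomial.eval₂_comp_left (Polynomial.evalRingHom t)]
  rw [MvPolynomial.eval]
  congr 1
  · ext a
    simp
  · funext i
    by_cases h : i = j <;> simp [h]

noncomputable def updPoly (j : Fin 2) (x : Fin 2 → ℂ) (f : MvPolynomial (Fin 2) ℂ) :
    Polynomial ℂ :=
  eval₂ Polynomial.C (fun i => if i = j then Polynomial.X else Polynomial.C (x i)) f

lemma updPoly_eval (j : Fin 2) (x : Fin 2 → ℂ) (f : MvPolynomial (Fin 2) ℂ) (s : ℂ) :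
    (updPoly j x f).eval s = eval (Function.update x j s) f := by
  show Polynomial.evalRingHom s (eval₂ Polynomial.C _ f) = _
  rw [MvPolynomial.eval₂_comp_left (Polynomial.evalRingHom s)]
  rw [MvPolynomial.eval]
  congr 1
  · ext a
    simp
  · funext i
    by_cases h : i = j <;> simp [h, Function.update_apply]

lemma exists_good_point {d : ℕ} {f : MvPolynomial (Fin 2) ℂ} (hf : f ≠ 0)
    (hhom : f.IsHomogeneous d) (j : Fin 2) :
    ∃ z : Fin 2 → ℂ, z j ≠ 0 ∧ eval z f ≠ 0 := by
  obtain ⟨x, hx⟩ : ∃ x : Fin 2 → ℂ, eval x f ≠ 0 := by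
    by_contra h
    push_neg at h
    exact hf (hhom.eq_zero_of_forall_eval_eq_zero h)
  set Q := updPoly j x f with hQ
  have hQ0 : Q ≠ 0 := by
    intro h0
    apply hx
    have := updPoly_eval j x f (x j)
    rw [← hQ, h0, Function.update_eq_self] at this
    simpa using this.symm
  have hfin : ({s : ℂ | Q.IsRoot s} ∪ {0}).Finite :=
    (Polynomial.finite_setOf_isRoot hQ0).union (Set.finite_singleton 0)
  obtain ⟨s, hs⟩ := hfin.infinite_compl.nonempty
  simp only [Set.mem_compl_iff, Set.mem_union, Set.mem_setOf_eq, Set.mem_singleton_iff,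
    not_or] at hs
  refine ⟨Function.update x j s, by simp [hs.2], ?_⟩
  rw [← updPoly_eval, ← hQ]
  exact hs.1

lemma chartPoly_ne_zero {d : ℕ} {f : MvPolynomial (Fin 2) ℂ} (hf : f ≠ 0)
    (hhom : f.IsHomogeneous d) (j k : Fin 2) (hjk : k ≠ j)
    (hcover : ∀ i : Fin 2, i = j ∨ i = k) : chartPoly j f ≠ 0 := by
  intro h0
  obtain ⟨z, hzj, hzf⟩ := exists_good_point hf hhom j
  apply hzf
  have hz : z = (z j) • (fun i => if i = j then (1:ℂ) else (z j)⁻¹ * z k) := by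
    funext i
    rcases hcover i with h | h <;> subst h
    · simp
    · simp only [Pi.smul_apply, smul_eq_mul, if_neg hjk]
      field_simp
  rw [hz, eval_smul_hom hhom, ← chartPoly_eval, h0]
  simp

lemma chartPoly_natDegree_le {d : ℕ} {f : MvPolynomial (Fin 2) ℂ} (hhom : f.IsHomogeneous d)
    (j : Fin 2) : (chartPoly j f).natDegree ≤ d := by
  rw [chartPoly, eval₂_eq]
  apply Polynomial.natDegree_sum_le_of_forall_le
  intro u hu
  apply Polynomial.natDegree_mul_le.trans
  rw [Polynomial.natDegree_C, zero_add]
  apply (Polynomial.natDegree_prod_le _ _).trans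
  calc ∑ i ∈ u.support, ((if i = j then 1 else Polynomial.X) ^ u i).natDegree
      ≤ ∑ i ∈ u.support, u i := by
        apply Finset.sum_le_sum
        intro i _
        by_cases h : i = j <;> simp [h, Polynomial.natDegree_X_pow]
    _ = d := support_degree hhom hu

def L2 (f : MvPolynomial (Fin 2) ℂ) (z : E2) : E2 →L[ℂ] ℂ :=
  ∑ i, eval (fun j => z j) (pderiv i f) • (EuclideanSpace.proj i : E2 →L[ℂ] ℂ)

theorem hasFDerivAt_eval (f : MvPolynomial (Fin 2) ℂ) (z : E2) :
    HasFDerivAt (fun z : E2 => eval (fun j => z j) f) (L2 f z) z := by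
  induction f using MvPolynomial.induction_on with
  | C a =>
      simp only [eval_C]
      convert hasFDerivAt_const (𝕜 := ℂ) a z using 1
      ext v
      simp [L2, Fin.sum_univ_two]
  | add p q hp hq =>
      have := hp.add hq
      simp only [eval_add] at this ⊢
      refine this.congr_fderiv ?_
      ext v
      simp only [L2, ContinuousLinearMap.add_apply, ContinuousLinearMap.smul_apply,
        ContinuousLinearMap.sum_apply, ContinuousLinearMap.coe_sum',
        Finset.sum_apply, map_add, Fin.sum_univ_two, smul_eq_mul]
      ring
  | mul_X p i hp =>
      have hXi : HasFDerivAt (fun z : E2 => z i) (EuclideanSpace.proj i : E2 →L[ℂ] ℂ) z :=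
        (EuclideanSpace.proj i : E2 →L[ℂ] ℂ).hasFDerivAt
      have := hp.mul hXi
      simp only [eval_mul, eval_X] at this ⊢
      refine this.congr_fderiv ?_
      ext v
      simp only [L2, ContinuousLinearMap.add_apply, ContinuousLinearMap.smul_apply,
        ContinuousLinearMap.sum_apply, ContinuousLinearMap.coe_sum',
        Finset.sum_apply, pderiv_mul, pderiv_X, map_add, eval_mul, eval_X]
      fin_cases i <;> rw [Fin.sum_univ_two, Fin.sum_univ_two] <;>
        simp [Pi.single_apply, smul_eq_mul] <;> ring

lemma L2_apply_single (f : MvPolynomial (Fin 2) ℂ) (w : E2) (i0 : Fin 2) :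
    L2 f w (EuclideanSpace.single i0 1) = eval (fun j => w j) (pderiv i0 f) := by
  simp only [L2, ContinuousLinearMap.sum_apply, ContinuousLinearMap.smul_apply]
  rw [Fin.sum_univ_two]
  fin_cases i0 <;>
    simp [EuclideanSpace.single_apply, smul_eq_mul]

lemma L2_smul {d : ℕ} (hd : 1 ≤ d) {f : MvPolynomial (Fin 2) ℂ} (hhom : f.IsHomogeneous d)
    {s : ℂ} (hs : s ≠ 0) (x : E2) : L2 f (s • x) = s ^ (d - 1) • L2 f x := by
  have A := hasFDerivAt_eval f (s • x)
  have M : HasFDerivAt (fun z : E2 => s • z) (s • ContinuousLinearMap.id ℂ E2) x :=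
    (ContinuousLinearMap.id ℂ E2).hasFDerivAt.const_smul s
  have comp := A.comp x M
  have heq : ((fun z : E2 => eval (fun j => z j) f) ∘ fun z : E2 => s • z)
      = fun z : E2 => s ^ d * eval (fun j => z j) f := by
    funext z
    show eval (fun j => (s • z) j) f = _
    have : (fun j => (s • z) j) = s • (fun j => z j) := rfl
    rw [this, eval_smul_hom hhom]
  rw [heq] at comp
  have B := (hasFDerivAt_eval f x).const_mul (s ^ d)
  have huniq := comp.unique B
  ext v
  have h1 : (L2 f (s • x)).comp (s • ContinuousLinearMap.id ℂ E2) v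
      = s * (L2 f (s • x) v) := by
    simp [ContinuousLinearMap.comp_apply]
  have h2 : ((s ^ d) • L2 f x) v = s ^ d * L2 f x v := rfl
  have := congrArg (fun (T : E2 →L[ℂ] ℂ) => T v) huniq
  simp only [h1, h2] at this
  have hsd : s ^ d = s * s ^ (d - 1) := by
    conv_lhs => rw [show d = 1 + (d - 1) by omega]
    rw [pow_add, pow_one]
  rw [hsd, mul_assoc] at this
  have := mul_left_cancel₀ hs this
  simpa using this

lemma euler_point {d : ℕ} {f : MvPolynomial (Fin 2) ℂ} (hhom : f.IsHomogeneous d) (w : E2) :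
    L2 f w w = (d : ℂ) * eval (fun j => w j) f := by
  have hψ : HasDerivAt (fun s : ℂ => s • w) w 1 := by
    simpa using (hasDerivAt_id (1:ℂ)).smul_const w
  have hF := hasFDerivAt_eval f w
  have h1w : (1:ℂ) • w = w := one_smul _ _
  have comp : HasDerivAt ((fun z : E2 => eval (fun j => z j) f) ∘ fun s : ℂ => s • w)
      (L2 f w w) 1 := by
    apply HasFDerivAt.comp_hasDerivAt
    · rw [h1w]; exact hF
    · exact hψ
  have heq : ((fun z : E2 => eval (fun j => z j) f) ∘ fun s : ℂ => s • w)
      = fun s : ℂ => s ^ d * eval (fun j => w j) f := by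
    funext s
    show eval (fun j => (s • w) j) f = _
    have : (fun j => (s • w) j) = s • (fun j => w j) := rfl
    rw [this, eval_smul_hom hhom]
  rw [heq] at comp
  have comp2 : HasDerivAt (fun s : ℂ => s ^ d * eval (fun j => w j) f)
      ((d : ℂ) * 1 ^ (d - 1) * eval (fun j => w j) f) 1 :=
    (hasDerivAt_pow d 1).mul_const _
  have := comp.unique comp2
  simpa using this

lemma chart_deriv {f : MvPolynomial (Fin 2) ℂ} (j k : Fin 2) (hjk : k ≠ j)
    (hcover : ∀ i : Fin 2, i = j ∨ i = k) (t : ℂ) (w : E2)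
    (hw : w = fun i => if i = j then 1 else t) :
    L2 f w (EuclideanSpace.single k 1) = (Polynomial.derivative (chartPoly j f)).eval t := by
  set ψ : ℂ → E2 := fun u => EuclideanSpace.single j 1 + u • EuclideanSpace.single k 1 with hψdef
  have hψcoords : ∀ u : ℂ, ∀ i, ψ u i = if i = j then 1 else u := by
    intro u i
    show EuclideanSpace.single j (1:ℂ) i + u * EuclideanSpace.single k (1:ℂ) i = _
    rcases hcover i with h | h <;> rw [h] <;> simp [EuclideanSpace.single_apply, hjk, Ne.symm hjk]
  have hψw : ψ t = w := by
    ext i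
    rw [hψcoords, hw]
  have hψd : HasDerivAt ψ (EuclideanSpace.single k 1) t := by
    simpa [hψdef] using ((hasDerivAt_id t).smul_const (EuclideanSpace.single k (1:ℂ))).const_add
      (EuclideanSpace.single j (1:ℂ))
  have comp : HasDerivAt ((fun z : E2 => eval (fun j => z j) f) ∘ ψ)
      (L2 f w (EuclideanSpace.single k 1)) t := by
    apply HasFDerivAt.comp_hasDerivAt
    · rw [hψw]; exact hasFDerivAt_eval f w
    · exact hψd
  have heq : ((fun z : E2 => eval (fun j => z j) f) ∘ ψ)
      = fun u : ℂ => (chartPoly j f).eval u := by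
    funext u
    show eval (fun i => (ψ u) i) f = _
    have hfn : (fun i => (ψ u) i) = (fun i => if i = j then (1:ℂ) else u) :=
      funext (hψcoords u)
    rw [hfn, chartPoly_eval]
  rw [heq] at comp
  exact comp.unique ((chartPoly j f).hasDerivAt t)

lemma lemB {d : ℕ} (hd : 1 ≤ d) {f : MvPolynomial (Fin 2) ℂ} (hf : f ≠ 0)
    (hhom : f.IsHomogeneous d) :
    ∃ c > 0, ∀ z : E2,
      c * ‖eval (fun i => z i) f‖ ^ (((d:ℝ) - 1) / d) ≤ ‖L2 f z‖ := by
  have hd0 : (0:ℝ) < d := by exact_mod_cast Nat.pos_of_ne_zero (by omega)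
  have hd1 : (1:ℝ) ≤ d := by exact_mod_cast hd
  set e : ℝ := ((d : ℝ) - 1) / d with he
  have he0 : 0 ≤ e := div_nonneg (by linarith) hd0.le
  have hF0 : eval (fun i => (0:E2) i) f = 0 := by
    have h00 : (fun i => (0:E2) i) = ((0:ℂ) • fun i => (0:E2) i) := by
      funext i; simp
    rw [h00, eval_smul_hom hhom, zero_pow (by omega), zero_mul]
  -- chart bound
  have chart : ∀ j k : Fin 2, k ≠ j → (∀ i : Fin 2, i = j ∨ i = k) →
      ∃ c > 0, ∀ z : E2, z j ≠ 0 → ‖z k‖ ≤ ‖z j‖ →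
        c * ‖eval (fun i => z i) f‖ ^ e ≤ ‖L2 f z‖ := by
    intro j k hjk hcover
    obtain ⟨cg, hcg0, hcg⟩ := lemA d hd (chartPoly j f)
      (chartPoly_ne_zero hf hhom j k hjk hcover) (chartPoly_natDegree_le hhom j)
    refine ⟨cg / 4, by positivity, fun z hzj hzk => ?_⟩
    have hzj' : 0 < ‖z j‖ := norm_pos_iff.2 hzj
    set t : ℂ := z k / z j with htdef
    have ht : ‖t‖ ≤ 1 := by
      rw [htdef, norm_div]
      exact div_le_one_of_le₀ hzk (norm_nonneg _)
    set w : E2 := WithLp.toLp 2 (fun i => if i = j then 1 else t) with hwdef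
    have hzw : z = z j • w := by
      ext i
      show z i = z j * w i
      rcases hcover i with h | h <;> rw [h]
      · show z j = z j * (if j = j then 1 else t); simp
      · show z k = z j * (if k = j then 1 else t)
        rw [if_neg hjk, htdef, mul_div_cancel₀ _ hzj]
    have hFw : eval (fun i => w i) f = (chartPoly j f).eval t :=
      (chartPoly_eval j f t).symm
    have hFz : eval (fun i => z i) f = (z j)^d * (chartPoly j f).eval t := by
      conv_lhs => rw [hzw]
      rw [show (fun i => (z j • w) i) = ((z j) • fun i => w i) from rfl,
        eval_smul_hom hhom, hFw]
    have hL : L2 f z = (z j)^(d-1) • L2 f w := by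
      conv_lhs => rw [hzw]
      exact L2_smul hd hhom hzj w
    have hLz : ‖L2 f z‖ = ‖z j‖ ^ (d - 1) * ‖L2 f w‖ := by
      rw [hL]
      rw [norm_smul (z j ^ (d-1)) (L2 f w), norm_pow]
    set Pk := L2 f w (EuclideanSpace.single k 1) with hPkdef
    set Pj := L2 f w (EuclideanSpace.single j 1) with hPjdef
    have hPk : Pk = (Polynomial.derivative (chartPoly j f)).eval t :=
      chart_deriv j k hjk hcover t w (by rw [hwdef])
    have hwsum : w = EuclideanSpace.single j 1 + t • EuclideanSpace.single k 1 := by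
      ext i
      show (if i = j then 1 else t) =
        EuclideanSpace.single j (1:ℂ) i + t * EuclideanSpace.single k (1:ℂ) i
      rcases hcover i with h | h <;> rw [h] <;>
        simp [EuclideanSpace.single_apply, hjk, Ne.symm hjk]
    have heuler : Pj + t * Pk = (d:ℂ) * (chartPoly j f).eval t := by
      have h1 := euler_point hhom w
      rw [hFw] at h1
      rw [← h1]
      calc Pj + t * Pk
          = L2 f w (EuclideanSpace.single j 1 + t • EuclideanSpace.single k 1) := by
            rw [map_add, map_smul, smul_eq_mul]
        _ = L2 f w w := by rw [← hwsum]
    have hb1 : ‖Pk‖ ≤ ‖L2 f w‖ := by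
      have := (L2 f w).le_opNorm (EuclideanSpace.single k 1)
      rwa [EuclideanSpace.norm_single, norm_one, mul_one] at this
    have hb2 : ‖Pj‖ ≤ ‖L2 f w‖ := by
      have := (L2 f w).le_opNorm (EuclideanSpace.single j 1)
      rwa [EuclideanSpace.norm_single, norm_one, mul_one] at this
    have hgd : ‖(Polynomial.derivative (chartPoly j f)).eval t‖ ≤ ‖L2 f w‖ := by
      rw [← hPk]; exact hb1
    have hgb : ‖(chartPoly j f).eval t‖ ≤ 2 * ‖L2 f w‖ := by
      have h1 : (d:ℝ) * ‖(chartPoly j f).eval t‖ = ‖Pj + t * Pk‖ := by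
        rw [heuler, norm_mul, Complex.norm_natCast]
      have h2 : ‖Pj + t * Pk‖ ≤ ‖Pj‖ + ‖t‖ * ‖Pk‖ := by
        calc ‖Pj + t * Pk‖ ≤ ‖Pj‖ + ‖t * Pk‖ := norm_add_le _ _
          _ = ‖Pj‖ + ‖t‖ * ‖Pk‖ := by rw [norm_mul]
      have h3 : ‖t‖ * ‖Pk‖ ≤ ‖Pk‖ := mul_le_of_le_one_left (norm_nonneg _) ht
      nlinarith [norm_nonneg ((chartPoly j f).eval t)]
    have hkey : cg * ‖(chartPoly j f).eval t‖ ^ e ≤ 4 * ‖L2 f w‖ := by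
      have h5 := hcg t ht
      rw [← he] at h5
      linarith [norm_nonneg (L2 f w)]
    have hnormz : ‖eval (fun i => z i) f‖ ^ e
        = ‖z j‖ ^ ((d:ℝ) - 1) * ‖(chartPoly j f).eval t‖ ^ e := by
      rw [hFz, norm_mul, norm_pow, Real.mul_rpow (by positivity) (norm_nonneg _)]
      congr 1
      rw [← Real.rpow_natCast ‖z j‖ d, ← Real.rpow_mul (norm_nonneg _)]
      congr 1
      rw [he]
      field_simp
    have hcast : ‖z j‖ ^ ((d:ℝ) - 1) = ‖z j‖ ^ (d - 1) := by
      rw [← Real.rpow_natCast ‖z j‖ (d - 1)]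
      congr 1
      rw [Nat.cast_sub hd, Nat.cast_one]
    calc cg / 4 * ‖eval (fun i => z i) f‖ ^ e
        = ‖z j‖ ^ ((d:ℝ) - 1) * (cg / 4 * ‖(chartPoly j f).eval t‖ ^ e) := by
          rw [hnormz]; ring
      _ ≤ ‖z j‖ ^ ((d:ℝ) - 1) * ‖L2 f w‖ := by
          apply mul_le_mul_of_nonneg_left (by linarith)
            (Real.rpow_nonneg (norm_nonneg _) _)
      _ = ‖L2 f z‖ := by rw [hcast, hLz]
  obtain ⟨cA, hcA0, hA⟩ := chart 0 1 (by decide) (by decide)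
  obtain ⟨cB, hcB0, hB⟩ := chart 1 0 (by decide) (by decide)
  obtain ⟨cZ, hcZ0, hZ⟩ : ∃ c > 0, c * ‖eval (fun i => (0:E2) i) f‖ ^ e ≤ ‖L2 f 0‖ := by
    rcases Nat.lt_or_ge d 2 with hd2 | hd2
    · -- d = 1
      have hd1' : d = 1 := by omega
      obtain ⟨x, _, hx⟩ := exists_good_point hf hhom 0
      set x' : E2 := WithLp.toLp 2 x with hx'
      have hL0 : L2 f 0 x' = eval x f := by
        have hc : HasDerivAt (fun s : ℂ => s • x') x' 0 := by
          simpa using (hasDerivAt_id (0:ℂ)).smul_const x'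
        have comp : HasDerivAt ((fun z : E2 => eval (fun j => z j) f) ∘ fun s : ℂ => s • x')
            (L2 f 0 x') 0 := by
          apply HasFDerivAt.comp_hasDerivAt
          · show HasFDerivAt _ _ ((0:ℂ) • x')
            rw [zero_smul]
            exact hasFDerivAt_eval f 0
          · exact hc
        have heq : ((fun z : E2 => eval (fun j => z j) f) ∘ fun s : ℂ => s • x')
            = fun s : ℂ => s * eval x f := by
          funext s
          show eval (fun j => (s • x') j) f = _
          rw [show (fun j => (s • x') j) = (s • fun j => x' j) from rfl,
            eval_smul_hom hhom, hd1', pow_one]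
        rw [heq] at comp
        have h2 : HasDerivAt (fun s : ℂ => s * eval x f) (eval x f) 0 := by
          simpa using (hasDerivAt_id (0:ℂ)).mul_const (eval x f)
        exact comp.unique h2
      have hx'0 : x' ≠ 0 := by
        intro h0
        apply hx
        show eval x f = 0
        calc eval x f = eval (fun i => x' i) f := rfl
          _ = eval (fun i => (0:E2) i) f := by rw [h0]
          _ = 0 := hF0
      have hn : 0 < ‖x'‖ := norm_pos_iff.2 hx'0
      have hxpos : 0 < ‖eval x f‖ := norm_pos_iff.2 hx
      refine ⟨‖eval x f‖ / ‖x'‖, div_pos hxpos hn, ?_⟩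
      have he' : e = 0 := by rw [he, hd1']; norm_num
      rw [he', Real.rpow_zero, mul_one, div_le_iff₀ hn]
      calc ‖eval x f‖ = ‖L2 f 0 x'‖ := by rw [hL0]
        _ ≤ ‖L2 f 0‖ * ‖x'‖ := (L2 f 0).le_opNorm x'
    · -- d ≥ 2
      refine ⟨1, one_pos, ?_⟩
      have he' : e ≠ 0 := by
        rw [he]
        apply ne_of_gt
        apply div_pos _ hd0
        have : (2:ℝ) ≤ d := by exact_mod_cast hd2
        linarith
      rw [hF0, norm_zero, Real.zero_rpow he', mul_zero]
      exact norm_nonneg _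
  refine ⟨min (min cA cB) cZ, by positivity, fun z => ?_⟩
  have hrnn : (0:ℝ) ≤ ‖eval (fun i => z i) f‖ ^ e := Real.rpow_nonneg (norm_nonneg _) _
  by_cases hz0 : z = 0
  · subst hz0
    calc min (min cA cB) cZ * ‖eval (fun i => (0:E2) i) f‖ ^ e
        ≤ cZ * ‖eval (fun i => (0:E2) i) f‖ ^ e :=
          mul_le_mul_of_nonneg_right (min_le_right _ _) (Real.rpow_nonneg (norm_nonneg _) _)
      _ ≤ ‖L2 f 0‖ := hZ
  · rcases le_total ‖z 1‖ ‖z 0‖ with h | h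
    · have hz0' : z 0 ≠ 0 := by
        intro h0
        apply hz0
        have h1 : z 1 = 0 := by
          rw [h0, norm_zero] at h
          exact norm_le_zero_iff.1 h
        ext i
        fin_cases i <;> simp [h0, h1]
      calc min (min cA cB) cZ * ‖eval (fun i => z i) f‖ ^ e
          ≤ cA * ‖eval (fun i => z i) f‖ ^ e :=
            mul_le_mul_of_nonneg_right ((min_le_left _ _).trans (min_le_left _ _)) hrnn
        _ ≤ ‖L2 f z‖ := hA z hz0' h
    · have hz1' : z 1 ≠ 0 := by
        intro h0
        apply hz0
        have h1 : z 0 = 0 := by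
          rw [h0, norm_zero] at h
          exact norm_le_zero_iff.1 h
        ext i
        fin_cases i <;> simp [h0, h1]
      calc min (min cA cB) cZ * ‖eval (fun i => z i) f‖ ^ e
          ≤ cB * ‖eval (fun i => z i) f‖ ^ e :=
            mul_le_mul_of_nonneg_right ((min_le_left _ _).trans (min_le_right _ _)) hrnn
        _ ≤ ‖L2 f z‖ := hB z hz1' h

end Stmt10Aux

/-- a nonzero complex homogeneous polynomial of degree `d ≥ 1` in two
variables has Łojasiewicz gradient exponent `1 - 1/d` at the origin. -/
theorem stmt10 (d : ℕ) (hd : 1 ≤ d) (f : MvPolynomial (Fin 2) ℂ) (hf : f ≠ 0)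
    (hhom : f.IsHomogeneous d) :
    LGE (fun z : EuclideanSpace ℂ (Fin 2) => MvPolynomial.eval (fun i => z i) f) =
      1 - 1 / (d : ℝ) := by
  have hd0 : (0:ℝ) < d := by exact_mod_cast Nat.pos_of_ne_zero (by omega)
  have hd1 : (1:ℝ) ≤ d := by exact_mod_cast hd
  set e : ℝ := ((d : ℝ) - 1) / d with he
  have he0 : 0 ≤ e := div_nonneg (by linarith) hd0.le
  have hgoal : (1:ℝ) - 1 / d = e := by
    rw [he]
    field_simp
  set F : E2 → ℂ := fun z : E2 => MvPolynomial.eval (fun i => z i) f with hF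
  have hfd : ∀ z : E2, fderiv ℂ F z = L2 f z := fun z => (hasFDerivAt_eval f z).fderiv
  have hF0 : F 0 = 0 := by
    have h00 : (fun i => (0:E2) i) = ((0:ℂ) • fun i => (0:E2) i) := by
      funext i; simp
    show MvPolynomial.eval (fun i => (0:E2) i) f = 0
    rw [h00, eval_smul_hom hhom, zero_pow (by omega), zero_mul]
  set S : Set ℝ := {l : ℝ | 0 < l ∧ ∃ c > (0:ℝ), ∃ ε > (0:ℝ), ∀ z : E2, ‖z‖ < ε →
    c * ‖F z‖ ^ l ≤ ‖fderiv ℂ F z‖} with hS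
  -- upper: every l > e is in S
  have hup : ∀ l : ℝ, e < l → l ∈ S := by
    intro l hl
    have hl0 : 0 < l := lt_of_le_of_lt he0 hl
    obtain ⟨c, hc0, hc⟩ := lemB hd hf hhom
    -- small ball where ‖F z‖ ≤ 1
    have hcont : Continuous F := by
      apply (MvPolynomial.continuous_eval f).comp
      exact continuous_pi fun i => (EuclideanSpace.proj (𝕜 := ℂ) i).continuous
    have hc1 : ContinuousAt F 0 := hcont.continuousAt
    rw [Metric.continuousAt_iff] at hc1
    obtain ⟨ε, hε0, hε⟩ := hc1 1 one_pos
    refine ⟨hl0, c, hc0, ε, hε0, fun z hz => ?_⟩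
    have hFz1 : ‖F z‖ ≤ 1 := by
      have := hε (show dist z 0 < ε by rwa [dist_zero_right])
      rw [hF0, dist_zero_right] at this
      exact this.le
    rw [hfd]
    calc c * ‖F z‖ ^ l ≤ c * ‖F z‖ ^ e :=
          mul_le_mul_of_nonneg_left
            (rpow_mono_exp (norm_nonneg _) hFz1 he0 hl.le) hc0.le
      _ ≤ ‖L2 f z‖ := hc z
  -- lower : every l in S is ≥ e
  have hlow : ∀ l ∈ S, e ≤ l := by
    intro l hl
    obtain ⟨hl0, c, hc0, ε, hε0, hineq⟩ := hl
    by_contra hlt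
    push_neg at hlt
    have hγ : 0 < (d:ℝ) - 1 - d * l := by
      rw [he, lt_div_iff₀ hd0] at hlt
      nlinarith
    set γ : ℝ := (d:ℝ) - 1 - d * l with hγdef
    obtain ⟨x, _, hx⟩ := exists_good_point hf hhom 0
    set x' : E2 := WithLp.toLp 2 x with hx'
    have hFx' : F x' = eval x f := rfl
    have hx'0 : x' ≠ 0 := by
      intro h0
      apply hx
      show eval x f = 0
      rw [← hFx', h0, hF0]
    have hnx : 0 < ‖x'‖ := norm_pos_iff.2 hx'0
    have hxpos : 0 < ‖eval x f‖ := norm_pos_iff.2 hx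
    set A : ℝ := ‖L2 f x'‖ with hA
    -- key pointwise inequality for small positive τ
    have hkey : ∀ τ : ℝ, 0 < τ → τ < ε / ‖x'‖ →
        c * ‖eval x f‖ ^ l ≤ A * τ ^ γ := by
      intro τ hτ0 hτε
      set z : E2 := (τ:ℂ) • x' with hzdef
      have hτC : (τ:ℂ) ≠ 0 := by
        simpa using hτ0.ne'
      have hznorm : ‖z‖ < ε := by
        rw [hzdef, norm_smul, Complex.norm_real, Real.norm_eq_abs, abs_of_pos hτ0]
        rw [lt_div_iff₀ hnx] at hτε
        linarith
      have h1 := hineq z hznorm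
      rw [hfd] at h1
      have hFzval : ‖F z‖ = τ ^ d * ‖eval x f‖ := by
        show ‖MvPolynomial.eval (fun i => z i) f‖ = _
        rw [hzdef, show (fun i => (((τ:ℂ) • x') : E2) i) = ((τ:ℂ) • fun i => x' i) from rfl,
          eval_smul_hom hhom]
        rw [norm_mul, norm_pow, Complex.norm_real, Real.norm_eq_abs, abs_of_pos hτ0]
      have hLzval : ‖L2 f z‖ = τ ^ (d - 1) * A := by
        rw [hzdef, L2_smul hd hhom hτC,
          norm_smul ((τ:ℂ)^(d-1)) (L2 f x'), norm_pow, Complex.norm_real,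
          Real.norm_eq_abs, abs_of_pos hτ0, hA]
      rw [hFzval, hLzval] at h1
      -- h1 : c * (τ^d * ‖eval x f‖)^l ≤ τ^(d-1) * A
      have hrw1 : (τ ^ d * ‖eval x f‖) ^ l = τ ^ ((d:ℝ) * l) * ‖eval x f‖ ^ l := by
        rw [Real.mul_rpow (by positivity) (norm_nonneg _), ← Real.rpow_natCast τ d,
          ← Real.rpow_mul hτ0.le]
      have hrw2 : (τ:ℝ) ^ (d - 1) = τ ^ (γ + (d:ℝ) * l) := by
        rw [← Real.rpow_natCast τ (d - 1)]
        congr 1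
        rw [Nat.cast_sub hd, Nat.cast_one, hγdef]
        ring
      rw [hrw1, hrw2, Real.rpow_add hτ0] at h1
      have hτl : 0 < τ ^ ((d:ℝ) * l) := Real.rpow_pos_of_pos hτ0 _
      calc c * ‖eval x f‖ ^ l
          = (c * (τ ^ ((d:ℝ) * l) * ‖eval x f‖ ^ l)) / τ ^ ((d:ℝ) * l) := by
            field_simp
        _ ≤ (τ ^ γ * τ ^ ((d:ℝ) * l) * A) / τ ^ ((d:ℝ) * l) := by
            exact div_le_div_of_nonneg_right h1 hτl.le
        _ = A * τ ^ γ := by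
            field_simp
    -- limit contradiction
    have hT : Filter.Tendsto (fun τ : ℝ => A * τ ^ γ) (nhdsWithin 0 (Set.Ioi 0))
        (nhds 0) := by
      have h1 : Filter.Tendsto (fun τ : ℝ => τ ^ γ) (nhds 0) (nhds ((0:ℝ) ^ γ)) :=
        (Real.continuousAt_rpow_const 0 γ (Or.inr hγ.le))
      rw [Real.zero_rpow hγ.ne'] at h1
      have h2 : Filter.Tendsto (fun τ : ℝ => A * τ ^ γ) (nhds 0) (nhds (A * 0)) :=
        h1.const_mul A
      rw [mul_zero] at h2
      exact h2.mono_left nhdsWithin_le_nhds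
    have hev : ∀ᶠ τ in nhdsWithin (0:ℝ) (Set.Ioi 0), A * τ ^ γ < c * ‖eval x f‖ ^ l :=
      hT.eventually_lt_const (by positivity)
    have hmem : Set.Ioo (0:ℝ) (ε / ‖x'‖) ∈ nhdsWithin (0:ℝ) (Set.Ioi 0) := by
      apply Ioo_mem_nhdsGT_of_mem
      constructor
      · exact le_refl 0
      · positivity
    obtain ⟨τ, hτ1, hτ2⟩ := (hev.and (Filter.eventually_of_mem hmem (fun x hx => hx))).exists
    exact absurd (hkey τ hτ2.1 hτ2.2) (not_le.2 hτ1)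
  -- conclude
  have hne : S.Nonempty := ⟨e + 1, hup _ (lt_add_one e)⟩
  have hbdd : BddBelow S := ⟨e, fun l hl => hlow l hl⟩
  rw [hgoal]
  show sInf S = e
  apply le_antisymm
  · apply le_of_forall_gt_imp_ge_of_dense
    intro a ha
    exact csInf_le hbdd (hup a ha)
  · exact le_csInf hne hlow
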